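/- For a staged tree, the ideal of model invariants I_T is contained in the paths ideal I_paths, which in turn is contained in the kernel of the algebraic parametrisation φ: ℝ[p_1,…,p_n] → ℝ[Θ]/⟨θ−1⟩ sending p_i to the product of edge labels on the i-th root-to-leaf path. -/

import Mathlib

inductive PTree (α : Type) : Type
  | leaf : PTree α
  | node : List (α × PTree α) → PTree α

namespace PTree

variable {α : Type} {R : Type} [CommRing R]

mutual
/-- list of (index-path, product of labels) over all root-to-leaf paths. -/
def leafData (f : α → R) : PTree α → List (List ℕ × R)
  | .leaf => [([], 1)]
  | .node cs => leafDataAux f 0 cs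
def leafDataAux (f : α → R) : ℕ → List (α × PTree α) → List (List ℕ × R)
  | _, [] => []
  | i, c :: cs =>
      ((leafData f c.2).map fun p => (i :: p.1, f c.1 * p.2)) ++ leafDataAux f (i + 1) cs
end

/-- the subtree rooted at the vertex given by an index path. -/
def subtreeAt : PTree α → List ℕ → Option (PTree α)
  | T, [] => some T
  | .leaf, _ :: _ => none
  | .node cs, i :: is =>
      match cs[i]? with
      | some c => subtreeAt c.2 is
      | none => none

/-- product of the labels along the root-to-v path. -/
def pathProd (f : α → R) : PTree α → List ℕ → Option R
  | _, [] => some 1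
  | .leaf, _ :: _ => none
  | .node cs, i :: is =>
      match cs[i]? with
      | some c => (pathProd f c.2 is).map (f c.1 * ·)
      | none => none

/-- t(T) : sum of the products of labels over all root-to-leaf paths of T. -/
def tPoly (f : α → R) (T : PTree α) : R :=
  ((leafData f T).map Prod.snd).sum

mutual
/-- the list of (index paths of) non-leaf vertices of T. -/
def intVerts : PTree α → List (List ℕ)
  | .leaf => []
  | .node cs => [] :: intVertsAux 0 cs
def intVertsAux : ℕ → List (α × PTree α) → List (List ℕ)
  | _, [] => []
  | i, c :: cs => ((intVerts c.2).map (i :: ·)) ++ intVertsAux (i + 1) cs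
end

mutual
/-- the local sum-to-one polynomials `Σ_{e ∈ E(v)} θ(e) − 1`, one for each non-leaf vertex. -/
noncomputable def stoPolys : PTree α → List (MvPolynomial α ℝ)
  | .leaf => []
  | .node cs => ((cs.map fun c => MvPolynomial.X c.1).sum - 1) :: stoPolysAux cs
noncomputable def stoPolysAux : List (α × PTree α) → List (MvPolynomial α ℝ)
  | [] => []
  | (_a, t) :: cs => stoPolys t ++ stoPolysAux cs
end

end PTree

namespace StagedTree

variable {m : ℕ}

/-- the list of root-to-leaf paths of a staged tree with labels the indeterminates
`X a`, `a : Fin m`, together with the corresponding monomials of edge labels. -/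
noncomputable def pathList (T : PTree (Fin m)) : List (List ℕ × MvPolynomial (Fin m) ℝ) :=
  PTree.leafData MvPolynomial.X T

/-- number of root-to-leaf paths (atomic events). -/
noncomputable def nAtoms (T : PTree (Fin m)) : ℕ := (pathList T).length

/-- the monomial parametrisation `φ_toric : ℝ[p_1,…,p_n] → ℝ[Θ]`,
`p_i ↦ ∏_{e ∈ E(λ_i)} θ(e)`. -/
noncomputable def phiToric (T : PTree (Fin m)) :
    MvPolynomial (Fin (nAtoms T)) ℝ →ₐ[ℝ] MvPolynomial (Fin m) ℝ :=
  MvPolynomial.aeval fun i => ((pathList T).get i).2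

/-- the ideal `⟨θ−1⟩` of local sum-to-one conditions. -/
noncomputable def stoIdeal (T : PTree (Fin m)) : Ideal (MvPolynomial (Fin m) ℝ) :=
  Ideal.span {q | q ∈ PTree.stoPolys T}

/-- the parametrisation `φ : ℝ[p_1,…,p_n] → ℝ[Θ]/⟨θ−1⟩`. -/
noncomputable def phi (T : PTree (Fin m)) :
    MvPolynomial (Fin (nAtoms T)) ℝ →ₐ[ℝ] (MvPolynomial (Fin m) ℝ ⧸ stoIdeal T) :=
  (Ideal.Quotient.mkₐ ℝ (stoIdeal T)).comp (phiToric T)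

/-- `p_{[v]}` as a linear polynomial in the atomic probabilities: the sum of the
variables `p_i` over all root-to-leaf paths `i` passing through the vertex `v`. -/
noncomputable def pPoly (T : PTree (Fin m)) (v : List ℕ) :
    MvPolynomial (Fin (nAtoms T)) ℝ :=
  (((List.finRange (nAtoms T)).filter fun i => v.isPrefixOf ((pathList T).get i).1).map
    MvPolynomial.X).sum

/-- vertices `v`, `w` are in the same stage with `k` emanating edges: both are non-leaf
vertices and their emanating edges carry the same ordered vector of labels. -/
def sameStage (T : PTree (Fin m)) (v w : List ℕ) (k : ℕ) : Prop :=
  ∃ csv csw : List (Fin m × PTree (Fin m)),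
    PTree.subtreeAt T v = some (PTree.node csv) ∧
    PTree.subtreeAt T w = some (PTree.node csw) ∧
    csv.map Prod.fst = csw.map Prod.fst ∧ csv.length = k

/-- the ideal `I_T` of model invariants, generated by the odds-ratio differences. -/
noncomputable def modelIdeal (T : PTree (Fin m)) : Ideal (MvPolynomial (Fin (nAtoms T)) ℝ) :=
  Ideal.span {q | ∃ v w k, sameStage T v w k ∧ ∃ i < k,
    q = pPoly T (v ++ [i]) * pPoly T w - pPoly T (w ++ [i]) * pPoly T v}

/-- the ideal `I_paths` generated by the path differences. -/
noncomputable def pathsIdeal (T : PTree (Fin m)) : Ideal (MvPolynomial (Fin (nAtoms T)) ℝ) :=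
  Ideal.span {q | ∃ v w k, sameStage T v w k ∧ ∃ i < k, ∃ j < k,
    q = pPoly T (v ++ [i]) * pPoly T (w ++ [j]) - pPoly T (w ++ [i]) * pPoly T (v ++ [j])}

/-- the product `𝐩` of all denominators `p_{[v]}`, `v` a non-leaf vertex. -/
noncomputable def bigP (T : PTree (Fin m)) : MvPolynomial (Fin (nAtoms T)) ℝ :=
  ((PTree.intVerts T).map (pPoly T)).prod

/-- `t(v)`, the sum of the monomials of the `v`-to-leaf paths of the subtree rooted at `v`. -/
noncomputable def tAt (T : PTree (Fin m)) (v : List ℕ) : MvPolynomial (Fin m) ℝ :=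
  match PTree.subtreeAt T v with
  | some S => PTree.tPoly MvPolynomial.X S
  | none => 0

/-- condition (⋆): `t(v_i)t(w_j) = t(w_i)t(v_j)` for all same-stage pairs. -/
def starCond (T : PTree (Fin m)) : Prop :=
  ∀ v w k, sameStage T v w k → ∀ i < k, ∀ j < k,
    tAt T (v ++ [i]) * tAt T (w ++ [j]) = tAt T (w ++ [i]) * tAt T (v ++ [j])

end StagedTree

namespace STAux

open PTree List StagedTree

variable {α : Type} {R : Type} [CommRing R] (f : α → R)

@[simp] lemma subtreeAt_nil (T : PTree α) : subtreeAt T [] = some T := by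
  cases T <;> rfl

@[simp] lemma subtreeAt_leaf_cons (i : ℕ) (is : List ℕ) :
    subtreeAt (PTree.leaf : PTree α) (i :: is) = none := rfl

@[simp] lemma subtreeAt_node_cons (cs : List (α × PTree α)) (i : ℕ) (is : List ℕ) :
    subtreeAt (PTree.node cs) (i :: is) =
      match cs[i]? with
      | some c => subtreeAt c.2 is
      | none => none := rfl

@[simp] lemma pathProd_nil (T : PTree α) : pathProd f T [] = some 1 := by
  cases T <;> rfl

@[simp] lemma pathProd_leaf_cons (i : ℕ) (is : List ℕ) :
    pathProd f (PTree.leaf : PTree α) (i :: is) = none := rfl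

@[simp] lemma pathProd_node_cons (cs : List (α × PTree α)) (i : ℕ) (is : List ℕ) :
    pathProd f (PTree.node cs) (i :: is) =
      match cs[i]? with
      | some c => (pathProd f c.2 is).map (f c.1 * ·)
      | none => none := rfl

lemma subtreeAt_node_some {cs : List (α × PTree α)} {i : ℕ} {c : α × PTree α} (is : List ℕ)
    (h : cs[i]? = some c) :
    subtreeAt (PTree.node cs) (i :: is) = subtreeAt c.2 is := by
  simp only [subtreeAt_node_cons, h]

lemma subtreeAt_node_none {cs : List (α × PTree α)} {i : ℕ} (is : List ℕ)
    (h : cs[i]? = none) :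
    subtreeAt (PTree.node cs) (i :: is) = none := by
  simp only [subtreeAt_node_cons, h]

lemma pathProd_node_some {cs : List (α × PTree α)} {i : ℕ} {c : α × PTree α} (is : List ℕ)
    (h : cs[i]? = some c) :
    pathProd f (PTree.node cs) (i :: is) = (pathProd f c.2 is).map (f c.1 * ·) := by
  simp only [pathProd_node_cons, h]

lemma pathProd_node_none {cs : List (α × PTree α)} {i : ℕ} (is : List ℕ)
    (h : cs[i]? = none) :
    pathProd f (PTree.node cs) (i :: is) = none := by
  simp only [pathProd_node_cons, h]

lemma mem_leafDataAux_head : ∀ (cs : List (α × PTree α)) (off : ℕ) (p : List ℕ × R),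
    p ∈ leafDataAux f off cs → ∃ j t, p.1 = j :: t ∧ off ≤ j ∧ j < off + cs.length
  | [], off, p, h => by simp [leafDataAux] at h
  | c :: cs, off, p, h => by
    rw [leafDataAux, List.mem_append] at h
    rcases h with h | h
    · obtain ⟨q, hq, rfl⟩ := List.mem_map.mp h
      exact ⟨off, q.1, rfl, le_refl _, by simp⟩
    · obtain ⟨j, t, h1, h2, h3⟩ := mem_leafDataAux_head cs (off + 1) p h
      exact ⟨j, t, h1, by omega, by simp only [List.length_cons]; omega⟩

lemma filter_leafDataAux_lt (cs : List (α × PTree α)) (off i : ℕ) (is : List ℕ) (h : i < off) :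
    (leafDataAux f off cs).filter (fun p => (i :: is).isPrefixOf p.1) = [] := by
  rw [List.filter_eq_nil_iff]
  intro p hp
  obtain ⟨j, t, h1, h2, _⟩ := mem_leafDataAux_head f cs off p hp
  simp only [h1, List.isPrefixOf, Bool.and_eq_true, beq_iff_eq]
  rintro ⟨rfl, -⟩
  omega

lemma filter_leafDataAux : ∀ (cs : List (α × PTree α)) (off i : ℕ) (is : List ℕ), off ≤ i →
    (leafDataAux f off cs).filter (fun p => (i :: is).isPrefixOf p.1) =
      match cs[i - off]? with
      | some c => ((leafData f c.2).filter fun p => is.isPrefixOf p.1).map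
          fun p => (i :: p.1, f c.1 * p.2)
      | none => []
  | [], off, i, is, h => by simp [leafDataAux]
  | c :: cs, off, i, is, h => by
    rw [leafDataAux, List.filter_append]
    rcases eq_or_lt_of_le h with rfl | hlt
    · rw [Nat.sub_self]
      simp only [List.getElem?_cons_zero]
      rw [filter_leafDataAux_lt f cs (off + 1) off is (by omega), List.append_nil,
        List.filter_map]
      congr 1
      apply List.filter_congr
      intro p _
      simp [List.isPrefixOf]
    · have hi : i - off = (i - (off + 1)) + 1 := by omega
      rw [hi, List.getElem?_cons_succ, ← filter_leafDataAux cs (off + 1) i is (by omega)]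
      have hnil : ((leafData f c.2).map fun p => (off :: p.1, f c.1 * p.2)).filter
          (fun p => (i :: is).isPrefixOf p.1) = [] := by
        rw [List.filter_eq_nil_iff]
        rintro p hp
        obtain ⟨q, hq, rfl⟩ := List.mem_map.mp hp
        simp only [List.isPrefixOf, Bool.and_eq_true, beq_iff_eq]
        rintro ⟨rfl, -⟩
        omega
      rw [hnil, List.nil_append]

lemma filter_leafData_subtree : ∀ (v : List ℕ) (T S : PTree α), subtreeAt T v = some S →
    ∃ q, pathProd f T v = some q ∧
      (leafData f T).filter (fun p => v.isPrefixOf p.1) =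
        (leafData f S).map fun p => (v ++ p.1, q * p.2)
  | [], T, S, h => by
    rw [subtreeAt_nil] at h
    cases h
    refine ⟨1, pathProd_nil f T, ?_⟩
    rw [List.filter_eq_self.mpr (fun p _ => by simp [List.isPrefixOf])]
    conv_lhs => rw [← List.map_id (leafData f T)]
    apply List.map_congr_left
    intro p _
    simp
  | i :: is, T, S, h => by
    cases T with
    | leaf => rw [subtreeAt_leaf_cons] at h; cases h
    | node cs =>
      cases hc : cs[i]? with
      | none => rw [subtreeAt_node_none is hc] at h; cases h
      | some c =>
        rw [subtreeAt_node_some is hc] at h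
        obtain ⟨q, hq, hfil⟩ := filter_leafData_subtree is c.2 S h
        refine ⟨f c.1 * q, ?_, ?_⟩
        · rw [pathProd_node_some f is hc, hq]; rfl
        · rw [leafData, filter_leafDataAux f cs 0 i is (Nat.zero_le _)]
          simp only [Nat.sub_zero, hc]
          rw [hfil, List.map_map]
          apply List.map_congr_left
          intro p _
          simp [mul_assoc]

lemma subtreeAt_snoc : ∀ (v : List ℕ) (T : PTree α) (cs : List (α × PTree α)) (i : ℕ)
    (c : α × PTree α), subtreeAt T v = some (PTree.node cs) → cs[i]? = some c →
    subtreeAt T (v ++ [i]) = some c.2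
  | [], T, cs, i, c, h1, h2 => by
    rw [subtreeAt_nil] at h1
    cases h1
    rw [List.nil_append, subtreeAt_node_some [] h2]
    exact subtreeAt_nil c.2
  | j :: js, T, cs, i, c, h1, h2 => by
    cases T with
    | leaf => rw [subtreeAt_leaf_cons] at h1; cases h1
    | node cs' =>
      cases hc' : cs'[j]? with
      | none => rw [subtreeAt_node_none js hc'] at h1; cases h1
      | some c' =>
        rw [subtreeAt_node_some js hc'] at h1
        rw [List.cons_append, subtreeAt_node_some (js ++ [i]) hc']
        exact subtreeAt_snoc js c'.2 cs i c h1 h2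

lemma pathProd_snoc : ∀ (v : List ℕ) (T : PTree α) (cs : List (α × PTree α)) (i : ℕ)
    (c : α × PTree α) (q : R), subtreeAt T v = some (PTree.node cs) → cs[i]? = some c →
    pathProd f T v = some q → pathProd f T (v ++ [i]) = some (q * f c.1)
  | [], T, cs, i, c, q, h1, h2, h3 => by
    rw [subtreeAt_nil] at h1
    cases h1
    rw [pathProd_nil] at h3
    cases h3
    rw [List.nil_append, pathProd_node_some f [] h2, pathProd_nil]
    simp [mul_comm]
  | j :: js, T, cs, i, c, q, h1, h2, h3 => by
    cases T with
    | leaf => rw [subtreeAt_leaf_cons] at h1; cases h1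
    | node cs' =>
      cases hc' : cs'[j]? with
      | none =>
        rw [pathProd_node_none f js hc'] at h3; cases h3
      | some c' =>
        rw [subtreeAt_node_some js hc'] at h1
        rw [pathProd_node_some f js hc'] at h3
        cases hq0 : pathProd f c'.2 js with
        | none => rw [hq0] at h3; cases h3
        | some q0 =>
          rw [hq0] at h3
          simp only [Option.map_some] at h3
          cases h3
          rw [List.cons_append, pathProd_node_some f (js ++ [i]) hc',
            pathProd_snoc js c'.2 cs i c q0 h1 h2 hq0]
          simp [mul_assoc]

lemma mem_stoPolysAux : ∀ (cs : List (α × PTree α)) (c : α × PTree α), c ∈ cs →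
    ∀ q ∈ stoPolys c.2, q ∈ stoPolysAux cs
  | [], c, h, _, _ => by simp at h
  | c' :: cs, c, h, q, hq => by
    obtain ⟨a, t⟩ := c'
    rw [stoPolysAux, List.mem_append]
    rcases List.mem_cons.mp h with rfl | h
    · exact Or.inl hq
    · exact Or.inr (mem_stoPolysAux cs c h q hq)

lemma stoPolys_subtreeAt : ∀ (v : List ℕ) (T S : PTree α), subtreeAt T v = some S →
    ∀ q ∈ stoPolys S, q ∈ stoPolys T
  | [], T, S, h => by rw [subtreeAt_nil] at h; cases h; exact fun q hq => hq
  | i :: is, T, S, h => by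
    cases T with
    | leaf => rw [subtreeAt_leaf_cons] at h; cases h
    | node cs =>
      cases hc : cs[i]? with
      | none => rw [subtreeAt_node_none is hc] at h; cases h
      | some c =>
        rw [subtreeAt_node_some is hc] at h
        intro q hq
        have h1 : q ∈ stoPolys c.2 := stoPolys_subtreeAt is c.2 S h q hq
        have h2 : c ∈ cs := by
          obtain ⟨hl, he⟩ := List.getElem?_eq_some_iff.mp hc
          exact he ▸ List.getElem_mem hl
        rw [stoPolys]
        exact List.mem_cons_of_mem _ (mem_stoPolysAux cs c h2 q h1)

lemma tPoly_aux : ∀ (cs : List (α × PTree α)) (off : ℕ),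
    ((leafDataAux f off cs).map Prod.snd).sum = (cs.map fun c => f c.1 * tPoly f c.2).sum
  | [], off => by simp [leafDataAux]
  | c :: cs, off => by
    rw [leafDataAux, List.map_append, List.sum_append, tPoly_aux cs (off + 1), List.map_map,
      List.map_cons, List.sum_cons]
    congr 1
    have h : (Prod.snd ∘ fun p : List ℕ × R => (off :: p.1, f c.1 * p.2)) =
        fun p : List ℕ × R => f c.1 * p.2 := rfl
    rw [h]
    exact List.sum_map_mul_left _ _ _

lemma tPoly_node (cs : List (α × PTree α)) :
    tPoly f (PTree.node cs) = (cs.map fun c => f c.1 * tPoly f c.2).sum := by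
  rw [tPoly, leafData]
  exact tPoly_aux f cs 0

lemma sum_map_mul_sub_one (cs : List (α × PTree α)) (g h : (α × PTree α) → R) :
    (cs.map fun c => g c * (h c - 1)).sum = (cs.map fun c => g c * h c).sum - (cs.map g).sum := by
  induction cs with
  | nil => simp
  | cons c cs ih => simp only [List.map_cons, List.sum_cons, ih]; ring

theorem tPoly_sub_one_mem : ∀ (S : PTree α),
    tPoly (MvPolynomial.X : α → MvPolynomial α ℝ) S - 1 ∈ Ideal.span {q | q ∈ stoPolys S}
  | .leaf => by simp [tPoly, leafData]
  | .node cs => by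
    rw [tPoly_node]
    have h1 : ((cs.map fun c => MvPolynomial.X c.1).sum - 1 : MvPolynomial α ℝ) ∈
        Ideal.span {q | q ∈ stoPolys (PTree.node cs)} := by
      apply Ideal.subset_span
      rw [stoPolys]
      exact List.mem_cons_self
    have h2 : ((cs.map fun c => MvPolynomial.X c.1 *
        (tPoly MvPolynomial.X c.2 - 1)).sum : MvPolynomial α ℝ) ∈
        Ideal.span {q | q ∈ stoPolys (PTree.node cs)} := by
      apply list_sum_mem
      intro x hx
      obtain ⟨c, hc, rfl⟩ := List.mem_map.mp hx
      obtain ⟨a, t⟩ := c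
      have hrec := tPoly_sub_one_mem t
      have hsub : Ideal.span {q | q ∈ stoPolys t} ≤
          Ideal.span {q | q ∈ stoPolys (PTree.node cs)} := by
        apply Ideal.span_mono
        intro q hq
        rw [stoPolys]
        exact List.mem_cons_of_mem _ (mem_stoPolysAux cs (a, t) hc q hq)
      exact Ideal.mul_mem_left _ _ (hsub hrec)
    have key : ((cs.map fun c => (MvPolynomial.X c.1 : MvPolynomial α ℝ) *
          tPoly MvPolynomial.X c.2).sum - 1 : MvPolynomial α ℝ) =
        ((cs.map fun c => (MvPolynomial.X c.1 : MvPolynomial α ℝ)).sum - 1) +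
          (cs.map fun c => (MvPolynomial.X c.1 : MvPolynomial α ℝ) *
            (tPoly MvPolynomial.X c.2 - 1)).sum := by
      rw [sum_map_mul_sub_one]
      ring
    rw [key]
    exact Ideal.add_mem _ h1 h2
  termination_by S => sizeOf S
  decreasing_by
    have := List.sizeOf_lt_of_mem hc
    simp only [Prod.mk.sizeOf_spec] at this
    simp only [PTree.node.sizeOf_spec]
    omega

end STAux

namespace STAux2

open PTree List StagedTree

variable {m : ℕ}

lemma filter_map_sum {ι M : Type*} [AddCommMonoid M] (l : List ι) (p : ι → Bool) (g : ι → M) :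
    ((l.filter p).map g).sum = (l.map fun i => if p i then g i else 0).sum := by
  induction l with
  | nil => rfl
  | cons a l ih => by_cases h : p a <;> simp [List.filter_cons, h, ih]

lemma pPoly_eq (T : PTree (Fin m)) (v : List ℕ) :
    pPoly T v = ∑ i : Fin (nAtoms T),
      if v.isPrefixOf ((pathList T).get i).1 then MvPolynomial.X i else 0 := by
  rw [pPoly]
  exact (filter_map_sum _ _ _).trans (Fin.sum_univ_def _).symm

lemma phiToric_pPoly (T : PTree (Fin m)) (v : List ℕ) :
    phiToric T (pPoly T v) =
      (((pathList T).filter fun p => v.isPrefixOf p.1).map Prod.snd).sum := by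
  rw [pPoly]
  erw [map_list_sum, List.map_map]
  have h1 : ((phiToric T : MvPolynomial (Fin (nAtoms T)) ℝ →ₐ[ℝ] MvPolynomial (Fin m) ℝ) ∘
      MvPolynomial.X) = fun i : Fin (nAtoms T) => ((pathList T).get i).2 :=
    funext fun i => MvPolynomial.aeval_X _ i
  erw [h1]
  conv_rhs => rw [← List.map_get_finRange (pathList T), List.filter_map, List.map_map]
  rfl

lemma phiToric_pPoly_eq (T : PTree (Fin m)) (v : List ℕ) (S : PTree (Fin m))
    (q : MvPolynomial (Fin m) ℝ) (hS : PTree.subtreeAt T v = some S)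
    (hq : PTree.pathProd MvPolynomial.X T v = some q) :
    phiToric T (pPoly T v) = q * PTree.tPoly MvPolynomial.X S := by
  obtain ⟨q', hq', hfil⟩ := STAux.filter_leafData_subtree (MvPolynomial.X : Fin m → MvPolynomial (Fin m) ℝ) v T S hS
  rw [hq] at hq'
  cases hq'
  rw [phiToric_pPoly]
  show (((leafData MvPolynomial.X T).filter fun p => v.isPrefixOf p.1).map Prod.snd).sum = _
  rw [hfil, List.map_map]
  have h2 : (Prod.snd ∘ fun p : List ℕ × MvPolynomial (Fin m) ℝ => (v ++ p.1, q * p.2)) =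
      fun p : List ℕ × MvPolynomial (Fin m) ℝ => q * p.2 := rfl
  rw [h2, List.sum_map_mul_left]
  rfl

lemma prefix_of_snoc_prefix {v : List ℕ} {j : ℕ} {p : List ℕ}
    (h : (v ++ [j]).isPrefixOf p) : v.isPrefixOf p := by
  rw [List.isPrefixOf_iff_prefix] at *
  exact (List.prefix_append v [j]).trans h

lemma snoc_prefix_iff {v : List ℕ} {j : ℕ} {t : List ℕ} {b : ℕ} :
    (v ++ [b]).isPrefixOf (v ++ j :: t) ↔ b = j := by
  rw [List.isPrefixOf_iff_prefix]
  have : (j :: t : List ℕ) = [j] ++ t := rfl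
  constructor
  · intro h
    rw [List.prefix_append_right_inj] at h
    obtain ⟨r, hr⟩ := h
    exact (List.cons.inj hr).1
  · rintro rfl
    rw [List.prefix_append_right_inj]
    exact ⟨t, rfl⟩

lemma pPoly_sum_children (T : PTree (Fin m)) (v : List ℕ) (cs : List (Fin m × PTree (Fin m)))
    (h : PTree.subtreeAt T v = some (PTree.node cs)) :
    pPoly T v = ∑ j ∈ Finset.range cs.length, pPoly T (v ++ [j]) := by
  obtain ⟨q, hq, hfil⟩ := STAux.filter_leafData_subtree (MvPolynomial.X : Fin m → MvPolynomial (Fin m) ℝ) v T _ h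
  simp only [pPoly_eq]
  rw [Finset.sum_comm]
  apply Finset.sum_congr rfl
  intro i _
  by_cases hpre : v.isPrefixOf ((pathList T).get i).1
  · rw [if_pos hpre]
    have hmem : (pathList T).get i ∈ (pathList T).filter fun p => v.isPrefixOf p.1 :=
      List.mem_filter.mpr ⟨List.get_mem _ _, hpre⟩
    have hmem2 : (pathList T).get i ∈
        (leafData MvPolynomial.X (PTree.node cs)).map
          fun p => (v ++ p.1, q * p.2) := by
      rw [← hfil]
      exact hmem
    obtain ⟨s, hs, hps⟩ := List.mem_map.mp hmem2
    have hs' : s ∈ leafDataAux MvPolynomial.X 0 cs := by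
      rw [← leafData]
      exact hs
    obtain ⟨j, t, hst, -, hjlt⟩ := STAux.mem_leafDataAux_head MvPolynomial.X cs 0 s hs'
    have hjlt' : j < cs.length := by omega
    have hp1 : ((pathList T).get i).1 = v ++ j :: t := by
      rw [← hps]
      show v ++ s.1 = v ++ j :: t
      rw [hst]
    have h0 : ∀ b ∈ Finset.range cs.length, b ≠ j →
        (if (v ++ [b]).isPrefixOf ((pathList T).get i).1 then (MvPolynomial.X i :
          MvPolynomial (Fin (nAtoms T)) ℝ) else 0) = 0 := by
      intro b _ hbj
      rw [if_neg]
      rw [hp1]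
      intro hcon
      exact hbj (snoc_prefix_iff.mp hcon)
    have h1 : j ∉ Finset.range cs.length →
        (if (v ++ [j]).isPrefixOf ((pathList T).get i).1 then (MvPolynomial.X i :
          MvPolynomial (Fin (nAtoms T)) ℝ) else 0) = 0 := by
      intro hj
      exact absurd (Finset.mem_range.mpr hjlt') hj
    rw [Finset.sum_eq_single j h0 h1, if_pos]
    rw [hp1]
    exact snoc_prefix_iff.mpr rfl
  · rw [if_neg hpre]
    symm
    apply Finset.sum_eq_zero
    intro j _
    rw [if_neg]
    intro hcon
    exact hpre (prefix_of_snoc_prefix hcon)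

end STAux2
open StagedTree in
/-- `I_T ⊆ I_paths ⊆ ker φ`. -/
theorem modelIdeal_le_pathsIdeal_le_ker {m : ℕ} (T : PTree (Fin m)) :
    modelIdeal T ≤ pathsIdeal T ∧
      pathsIdeal T ≤ RingHom.ker (phi T : MvPolynomial (Fin (nAtoms T)) ℝ →+*
        MvPolynomial (Fin m) ℝ ⧸ stoIdeal T) := by
  constructor
  · rw [modelIdeal, Ideal.span_le]
    rintro g ⟨v, w, k, hst, i, hik, rfl⟩
    obtain ⟨csv, csw, hv, hw, hlab, hlen⟩ := hst
    have hlenw : csw.length = k := by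
      have := congrArg List.length hlab
      simp only [List.length_map] at this
      omega
    have hkv : pPoly T v = ∑ j ∈ Finset.range k, pPoly T (v ++ [j]) := by
      rw [STAux2.pPoly_sum_children T v csv hv, hlen]
    have hkw : pPoly T w = ∑ j ∈ Finset.range k, pPoly T (w ++ [j]) := by
      rw [STAux2.pPoly_sum_children T w csw hw, hlenw]
    rw [SetLike.mem_coe, hkv, hkw, Finset.mul_sum, Finset.mul_sum, ← Finset.sum_sub_distrib]
    apply Ideal.sum_mem
    intro j hj
    apply Ideal.subset_span
    exact ⟨v, w, k, ⟨csv, csw, hv, hw, hlab, hlen⟩, i, hik, j, Finset.mem_range.mp hj, rfl⟩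
  · rw [pathsIdeal, Ideal.span_le]
    rintro g ⟨v, w, k, hst, i, hik, j, hjk, rfl⟩
    obtain ⟨csv, csw, hv, hw, hlab, hlen⟩ := hst
    have hlenw : csw.length = k := by
      have := congrArg List.length hlab
      simp only [List.length_map] at this
      omega
    -- index bounds
    have hiv : i < csv.length := by omega
    have hjv : j < csv.length := by omega
    have hiw : i < csw.length := by omega
    have hjw : j < csw.length := by omega
    have hvi : csv[i]? = some (csv[i]'hiv) := List.getElem?_eq_getElem hiv
    have hvj : csv[j]? = some (csv[j]'hjv) := List.getElem?_eq_getElem hjv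
    have hwi : csw[i]? = some (csw[i]'hiw) := List.getElem?_eq_getElem hiw
    have hwj : csw[j]? = some (csw[j]'hjw) := List.getElem?_eq_getElem hjw
    -- label equalities
    have hlabi : ((csv[i]'hiv)).1 = ((csw[i]'hiw)).1 := by
      have h := congrArg (fun l => l[i]?) hlab
      simp only [List.getElem?_map, hvi, hwi, Option.map_some] at h
      exact Option.some.inj h
    have hlabj : ((csv[j]'hjv)).1 = ((csw[j]'hjw)).1 := by
      have h := congrArg (fun l => l[j]?) hlab
      simp only [List.getElem?_map, hvj, hwj, Option.map_some] at h
      exact Option.some.inj h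
    -- base path products
    obtain ⟨qv, hqv, -⟩ := STAux.filter_leafData_subtree
      (MvPolynomial.X : Fin m → MvPolynomial (Fin m) ℝ) v T _ hv
    obtain ⟨qw, hqw, -⟩ := STAux.filter_leafData_subtree
      (MvPolynomial.X : Fin m → MvPolynomial (Fin m) ℝ) w T _ hw
    -- subtrees and path products at children
    have hsvi := STAux.subtreeAt_snoc v T csv i (csv[i]'hiv) hv hvi
    have hsvj := STAux.subtreeAt_snoc v T csv j (csv[j]'hjv) hv hvj
    have hswi := STAux.subtreeAt_snoc w T csw i (csw[i]'hiw) hw hwi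
    have hswj := STAux.subtreeAt_snoc w T csw j (csw[j]'hjw) hw hwj
    have hpvi := STAux.pathProd_snoc
      (MvPolynomial.X : Fin m → MvPolynomial (Fin m) ℝ) v T csv i (csv[i]'hiv) qv hv hvi hqv
    have hpvj := STAux.pathProd_snoc
      (MvPolynomial.X : Fin m → MvPolynomial (Fin m) ℝ) v T csv j (csv[j]'hjv) qv hv hvj hqv
    have hpwi := STAux.pathProd_snoc
      (MvPolynomial.X : Fin m → MvPolynomial (Fin m) ℝ) w T csw i (csw[i]'hiw) qw hw hwi hqw
    have hpwj := STAux.pathProd_snoc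
      (MvPolynomial.X : Fin m → MvPolynomial (Fin m) ℝ) w T csw j (csw[j]'hjw) qw hw hwj hqw
    -- phiToric values
    have e1 := STAux2.phiToric_pPoly_eq T (v ++ [i]) _ _ hsvi hpvi
    have e2 := STAux2.phiToric_pPoly_eq T (w ++ [j]) _ _ hswj hpwj
    have e3 := STAux2.phiToric_pPoly_eq T (w ++ [i]) _ _ hswi hpwi
    have e4 := STAux2.phiToric_pPoly_eq T (v ++ [j]) _ _ hsvj hpvj
    -- tPolys are 1 mod stoIdeal
    have hone : ∀ (u : List ℕ) (S : PTree (Fin m)), PTree.subtreeAt T u = some S →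
        Ideal.Quotient.mk (stoIdeal T) (PTree.tPoly MvPolynomial.X S) = 1 := by
      intro u S hS
      have hmem : PTree.tPoly MvPolynomial.X S - 1 ∈ stoIdeal T := by
        have h1 := STAux.tPoly_sub_one_mem S
        have h2 : Ideal.span {q | q ∈ PTree.stoPolys S} ≤ stoIdeal T := by
          rw [stoIdeal]
          exact Ideal.span_mono (fun q hq => STAux.stoPolys_subtreeAt u T S hS q hq)
        exact h2 h1
      have := Ideal.Quotient.eq_zero_iff_mem.mpr hmem
      rw [map_sub, map_one, sub_eq_zero] at this
      exact this
    have h1 := hone _ _ hsvi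
    have h2 := hone _ _ hswj
    have h3 := hone _ _ hswi
    have h4 := hone _ _ hsvj
    rw [SetLike.mem_coe, RingHom.mem_ker]
    have hphi : ∀ x : MvPolynomial (Fin (nAtoms T)) ℝ,
        (phi T : MvPolynomial (Fin (nAtoms T)) ℝ →+* MvPolynomial (Fin m) ℝ ⧸ stoIdeal T) x =
          Ideal.Quotient.mk (stoIdeal T) (phiToric T x) := fun x => rfl
    rw [hphi, map_sub, map_mul, map_mul, e1, e2, e3, e4]
    simp only [map_sub, map_mul, h1, h2, h3, h4, mul_one]
    rw [hlabi, hlabj]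
    ring
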